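/- Let A, B be bounded operators on a Banach space with ‖e^{tB}‖ ≤ 1 for all t ≥ 0. Then for all α ≥ 0, ‖e^{αA}‖ ≤ e^{α‖A - B‖}. -/

import Mathlib

open NormedSpace Nat

lemma pow_sub_pow_norm_le {X : Type*} [NormedAddCommGroup X] [NormedSpace ℂ X]
    (A B : X →L[ℂ] X) (k : ℕ) :
    ‖A ^ k - B ^ k‖ ≤ k * max ‖A‖ ‖B‖ ^ (k - 1) * ‖A - B‖ := by
  set M := max ‖A‖ ‖B‖ with hM
  have hM0 : 0 ≤ M := le_trans (norm_nonneg A) (le_max_left _ _)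
  have hpow : ∀ m, ‖B ^ m‖ ≤ M ^ m := by
    intro m
    induction m with
    | zero => simp only [pow_zero]; exact ContinuousLinearMap.norm_id_le
    | succ m ih =>
      calc ‖B ^ (m+1)‖ = ‖B * B ^ m‖ := by rw [_root_.pow_succ']
        _ ≤ ‖B‖ * ‖B ^ m‖ := norm_mul_le _ _
        _ ≤ M * M ^ m := by
            exact mul_le_mul (le_max_right _ _) ih (norm_nonneg _) hM0
        _ = M ^ (m+1) := (_root_.pow_succ' M m).symm
  induction k with
  | zero => simp
  | succ k ih =>
    have hid : A ^ (k+1) - B ^ (k+1) = A * (A ^ k - B ^ k) + (A - B) * B ^ k := by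
      rw [_root_.pow_succ', _root_.pow_succ']
      noncomm_ring
    calc ‖A ^ (k+1) - B ^ (k+1)‖
        ≤ ‖A * (A ^ k - B ^ k)‖ + ‖(A - B) * B ^ k‖ := by rw [hid]; exact norm_add_le _ _
      _ ≤ ‖A‖ * ‖A ^ k - B ^ k‖ + ‖A - B‖ * ‖B ^ k‖ := by
          gcongr <;> exact norm_mul_le _ _
      _ ≤ M * (k * M ^ (k-1) * ‖A - B‖) + ‖A - B‖ * M ^ k := by
          have hA : ‖A‖ ≤ M := le_max_left _ _
          gcongr
          exact hpow k
      _ ≤ (k+1 : ℕ) * M ^ ((k+1) - 1) * ‖A - B‖ := by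
          rcases Nat.eq_zero_or_pos k with rfl | hk
          · simp
          · have h1 : M * (k * M ^ (k-1) * ‖A-B‖) = k * (M * M ^ (k-1)) * ‖A-B‖ := by ring
            have h2 : M * M ^ (k-1) = M ^ k := by
              rw [← _root_.pow_succ']
              congr 1
              omega
            rw [h1, h2]
            push_cast
            nlinarith [norm_nonneg (A - B), pow_nonneg hM0 k, norm_nonneg (A-B)]

lemma exp_smul_sub_norm_le {X : Type*} [NormedAddCommGroup X] [NormedSpace ℂ X] [CompleteSpace X]
    (A B : X →L[ℂ] X) (t : ℝ) (ht : 0 ≤ t) :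
    ‖exp ((t : ℂ) • A) - exp ((t : ℂ) • B)‖ ≤
      t * ‖A - B‖ * Real.exp (t * max ‖A‖ ‖B‖) := by
  set M := max ‖A‖ ‖B‖ with hMdef
  have hM0 : 0 ≤ M := le_trans (norm_nonneg A) (le_max_left _ _)
  set C := ‖A - B‖ with hCdef
  have hC0 : 0 ≤ C := norm_nonneg _
  set u : ℕ → ℝ := fun n => ((n ! : ℝ))⁻¹ * t ^ n * (n * M ^ (n-1) * C) with hu
  have hushift : (fun n => u (n+1)) = fun n => (t * C) * ((t*M) ^ n / n !) := by
    funext n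
    have h1 : ((n+1)! : ℝ) = (n+1) * n ! := by push_cast [Nat.factorial_succ]; ring
    have h2 : ((n+1)! : ℝ) ≠ 0 := by positivity
    have h3 : (n ! : ℝ) ≠ 0 := by positivity
    simp only [hu, h1, Nat.add_sub_cancel, Nat.cast_add, Nat.cast_one]
    field_simp
    ring
  have husum : Summable u := by
    rw [← summable_nat_add_iff 1, hushift]
    exact (Real.summable_pow_div_factorial (t*M)).mul_left _
  have hterm : ∀ n : ℕ,
      ‖(n !⁻¹ : ℂ) • ((t:ℂ) • A) ^ n - (n !⁻¹ : ℂ) • ((t:ℂ) • B) ^ n‖ ≤ u n := by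
    intro n
    have hid : (n !⁻¹ : ℂ) • ((t:ℂ) • A) ^ n - (n !⁻¹ : ℂ) • ((t:ℂ) • B) ^ n
        = ((((n ! : ℝ))⁻¹ * t ^ n : ℝ) : ℂ) • (A ^ n - B ^ n) := by
      rw [smul_pow, smul_pow, smul_smul, smul_smul, ← smul_sub]
      congr 1
      push_cast
      ring
    rw [hid]
    rw [norm_smul ((((n ! : ℝ))⁻¹ * t ^ n : ℝ) : ℂ) (A ^ n - B ^ n)]
    have habs : ‖((((n ! : ℝ))⁻¹ * t ^ n : ℝ) : ℂ)‖ = ((n ! : ℝ))⁻¹ * t ^ n := by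
      rw [Complex.norm_real, Real.norm_eq_abs, abs_of_nonneg (by positivity)]
    rw [habs]
    exact mul_le_mul_of_nonneg_left (pow_sub_pow_norm_le A B n) (by positivity)
  have hsum1 : Summable fun n => (n !⁻¹ : ℂ) • ((t:ℂ) • A) ^ n := expSeries_summable' _
  have hsum2 : Summable fun n => (n !⁻¹ : ℂ) • ((t:ℂ) • B) ^ n := expSeries_summable' _
  have hdiff : exp ((t:ℂ) • A) - exp ((t:ℂ) • B)
      = ∑' n : ℕ, ((n !⁻¹ : ℂ) • ((t:ℂ) • A) ^ n - (n !⁻¹ : ℂ) • ((t:ℂ) • B) ^ n) := by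
    rw [exp_eq_tsum ℂ]
    exact (Summable.tsum_sub hsum1 hsum2).symm
  rw [hdiff]
  calc ‖∑' n : ℕ, ((n !⁻¹ : ℂ) • ((t:ℂ) • A) ^ n - (n !⁻¹ : ℂ) • ((t:ℂ) • B) ^ n)‖
      ≤ ∑' n : ℕ, u n := by
        apply tsum_of_norm_bounded ?_ hterm
        exact husum.hasSum
    _ = t * C * Real.exp (t * M) := by
        rw [Summable.tsum_eq_zero_add husum]
        have h0 : u 0 = 0 := by simp [hu]
        rw [h0, zero_add]
        have := congrFun hushift
        rw [tsum_congr (fun n => congrFun hushift n), tsum_mul_left]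
        congr 1
        rw [Real.exp_eq_exp_ℝ, exp_eq_tsum_div]

theorem stmt8 {X : Type*} [NormedAddCommGroup X] [NormedSpace ℂ X] [CompleteSpace X]
    (A B : X →L[ℂ] X)
    (hB : ∀ t : ℝ, 0 ≤ t → ‖exp ((t : ℂ) • B)‖ ≤ 1) :
    ∀ α : ℝ, 0 ≤ α → ‖exp ((α : ℂ) • A)‖ ≤ Real.exp (α * ‖A - B‖) := by
  intro α hα
  set M := max ‖A‖ ‖B‖ with hMdef
  have hM0 : 0 ≤ M := le_trans (norm_nonneg A) (le_max_left _ _)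
  set C := ‖A - B‖ with hCdef
  have hC0 : 0 ≤ C := norm_nonneg _
  have hstep : ∀ t : ℝ, 0 ≤ t → ‖exp ((t:ℂ) • A)‖ ≤ 1 + t * C * Real.exp (t * M) := by
    intro t ht
    calc ‖exp ((t:ℂ) • A)‖
        ≤ ‖exp ((t:ℂ) • B)‖ + ‖exp ((t:ℂ) • A) - exp ((t:ℂ) • B)‖ :=
          norm_le_insert' _ _
      _ ≤ 1 + t * C * Real.exp (t * M) :=
          add_le_add (hB t ht) (exp_smul_sub_norm_le A B t ht)
  have hn : ∀ n : ℕ, 1 ≤ n → ‖exp ((α:ℂ) • A)‖ ≤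
      Real.exp (α * C * Real.exp (α * M / n)) := by
    intro n hn1
    have hnpos : (0:ℝ) < n := by exact_mod_cast hn1
    have hsplit : (α:ℂ) • A = n • (((α/n : ℝ):ℂ) • A) := by
      rw [← Nat.cast_smul_eq_nsmul ℂ, smul_smul]
      congr 1
      have hn0 : (n:ℂ) ≠ 0 := Nat.cast_ne_zero.2 (by omega)
      push_cast
      field_simp
    have h1 : 0 ≤ α / n := div_nonneg hα hnpos.le
    have hb := hstep (α/n) h1
    have hbnn : (0:ℝ) ≤ 1 + (α/n) * C * Real.exp ((α/n) * M) := by positivity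
    calc ‖exp ((α:ℂ) • A)‖ = ‖exp (((α/n : ℝ):ℂ) • A) ^ n‖ := by
          letI : NormedAlgebra ℚ (X →L[ℂ] X) := NormedAlgebra.restrictScalars ℚ ℂ (X →L[ℂ] X)
          rw [hsplit, exp_nsmul]
      _ ≤ ‖exp (((α/n : ℝ):ℂ) • A)‖ ^ n := norm_pow_le' _ (by omega)
      _ ≤ (1 + (α/n) * C * Real.exp ((α/n) * M)) ^ n := by
          apply pow_le_pow_left₀ (norm_nonneg _) hb
      _ ≤ Real.exp ((α/n) * C * Real.exp ((α/n) * M)) ^ n := by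
          apply pow_le_pow_left₀ hbnn
          linarith [Real.add_one_le_exp ((α/n) * C * Real.exp ((α/n) * M))]
      _ = Real.exp (n * ((α/n) * C * Real.exp ((α/n) * M))) := by
          rw [← Real.exp_nat_mul]
      _ = Real.exp (α * C * Real.exp (α * M / n)) := by
          congr 1
          rw [div_mul_eq_mul_div]
          field_simp
  have htend : Filter.Tendsto (fun n : ℕ => Real.exp (α * C * Real.exp (α * M / n)))
      Filter.atTop (nhds (Real.exp (α * C))) := by
    have h1 : Filter.Tendsto (fun n : ℕ => α * M / n) Filter.atTop (nhds 0) :=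
      tendsto_const_div_atTop_nhds_zero_nat _
    have h2 := (Real.continuous_exp.tendsto 0).comp h1
    simp only [Function.comp, Real.exp_zero] at h2
    have h3 := h2.const_mul (α * C)
    rw [mul_one] at h3
    exact (Real.continuous_exp.tendsto _).comp h3
  exact ge_of_tendsto htend (Filter.eventually_atTop.2 ⟨1, hn⟩)
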